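/- arXiv:1806.07347 — 2 statements merged into one kernel-verified Lean document; each statement's English description precedes it below -/
import Mathlib

section
/- Let $(\phi_k)_{k=1}^n$ be orthonormal in $L^2(S,\nu)$ and $K(u,v) = \sum_{k=1}^n \lambda_k \phi_k(u)\overline{\phi_k(v)}$ with all $\lambda_k \in [0,1]$. If $\int_S |K(u,v)|^2 \, d\nu(v) = K(u,u)$ for $\nu$-almost every $u \in S$, then for every $k$ with $\lambda_k \notin \{0,1\}$ we have $\phi_k = 0$ $\nu$-almost everywhere; in particular, $K$ agrees $\nu^2$-a.e. with a projection kernel. -/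
open MeasureTheory

/-- If `K(u,v) = ∑ₖ λₖ φₖ(u) conj(φₖ(v))` with `λₖ ∈ [0,1]` and orthonormal `φₖ`
satisfies `∫ |K(u,v)|² dν(v) = K(u,u)` for `ν`-a.e. `u`, then every eigenfunction
with eigenvalue not in `{0,1}` vanishes `ν`-a.e.; in particular `K` agrees
`ν²`-a.e. with the projection kernel onto the eigenfunctions with `λₖ = 1`. -/
theorem pu_eq_one_ae_implies_projection {S : Type*} [MeasurableSpace S]
    (ν : Measure S) [SigmaFinite ν] (n : ℕ) (φ : Fin n → S → ℂ)
    (hmeas : ∀ k, Measurable (φ k))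
    (horth : ∀ k l, ∫ v, φ k v * starRingEnd ℂ (φ l v) ∂ν =
      if k = l then 1 else 0)
    (lam : Fin n → ℝ) (hlam : ∀ k, lam k ∈ Set.Icc (0 : ℝ) 1)
    (K : S → S → ℂ)
    (hK : ∀ u v, K u v = ∑ k, (lam k : ℂ) * φ k u * starRingEnd ℂ (φ k v))
    (hone : ∀ᵐ u ∂ν, (∫ v, ‖K u v‖ ^ 2 ∂ν) = (K u u).re) :
    (∀ k, lam k ≠ 0 → lam k ≠ 1 → (∀ᵐ v ∂ν, φ k v = 0)) ∧
      (∀ᵐ p ∂(ν.prod ν), K p.1 p.2 =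
        ∑ k ∈ Finset.univ.filter (fun k => lam k = 1),
          φ k p.1 * starRingEnd ℂ (φ k p.2)) := by
  classical
  -- each φ k is in L²
  have hInt2 : ∀ k, Integrable (fun v => φ k v * starRingEnd ℂ (φ k v)) ν := by
    intro k
    by_contra h
    have h1 := horth k k
    rw [integral_undef h] at h1
    simp at h1
  have hL2 : ∀ k, MemLp (φ k) 2 ν := by
    intro k
    rw [memLp_two_iff_integrable_sq_norm ((hmeas k)).aestronglyMeasurable]
    have heq : (fun v => φ k v * starRingEnd ℂ (φ k v))
        = fun v => ((‖φ k v‖ ^ 2 : ℝ) : ℂ) := by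
      funext v
      rw [Complex.mul_conj]
      norm_cast
      rw [Complex.normSq_eq_norm_sq]
    have h2 := hInt2 k
    rw [heq] at h2
    simpa [← Complex.ofReal_pow] using h2.re
  have hL2c : ∀ k, MemLp (fun v => starRingEnd ℂ (φ k v)) 2 ν := by
    intro k
    have hm : Measurable (fun v => starRingEnd ℂ (φ k v)) :=
      continuous_star.measurable.comp (hmeas k)
    rw [memLp_two_iff_integrable_sq_norm hm.aestronglyMeasurable]
    have := (memLp_two_iff_integrable_sq_norm (hmeas k).aestronglyMeasurable).mp (hL2 k)
    simpa using this
  -- product of two L² functions is integrable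
  have hmul : ∀ f g : S → ℂ, MemLp f 2 ν → MemLp g 2 ν →
      Integrable (fun v => f v * g v) ν := by
    intro f g hf hg
    have h12 : (1 : ENNReal) / 1 = 1 / 2 + 1 / 2 := by
      rw [one_div_one]
      exact (ENNReal.add_halves 1).symm
    have := hg.smul (φ := f) hf (r := 1)
    rw [memLp_one_iff_integrable] at this
    exact this
  -- conjugated orthonormality
  have horth' : ∀ k l, (∫ v, starRingEnd ℂ (φ k v) * φ l v ∂ν)
      = if k = l then 1 else 0 := by
    intro k l
    have h1 := congrArg (starRingEnd ℂ) (horth k l)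
    rw [← integral_conj] at h1
    simp only [map_mul, Complex.conj_conj] at h1
    rw [h1]
    split <;> simp
  -- integrability of each term in the expansion of |K u ·|²
  have hIntTerm : ∀ (u : S) (k l : Fin n), Integrable
      (fun v => ((lam k : ℂ) * (lam l : ℂ) * φ k u * starRingEnd ℂ (φ l u))
        * (starRingEnd ℂ (φ k v) * φ l v)) ν :=
    fun u k l => ((hmul _ _ (hL2c k) (hL2 l)).const_mul _)
  have hIntK : ∀ u, Integrable (fun v => K u v * starRingEnd ℂ (K u v)) ν := by
    intro u
    have hpt : (fun v => K u v * starRingEnd ℂ (K u v)) = fun v => ∑ k, ∑ l,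
        ((lam k : ℂ) * (lam l : ℂ) * φ k u * starRingEnd ℂ (φ l u))
          * (starRingEnd ℂ (φ k v) * φ l v) := by
      funext v
      rw [hK, map_sum, Finset.sum_mul_sum]
      refine Finset.sum_congr rfl fun k _ => Finset.sum_congr rfl fun l _ => ?_
      simp only [map_mul, Complex.conj_conj, Complex.conj_ofReal]
      ring
    rw [hpt]
    exact integrable_finset_sum _ fun k _ => integrable_finset_sum _ fun l _ => hIntTerm u k l
  -- key computation
  have hKey : ∀ u, (∫ v, K u v * starRingEnd ℂ (K u v) ∂ν)
      = ∑ k, ((lam k : ℂ) ^ 2) * (φ k u * starRingEnd ℂ (φ k u)) := by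
    intro u
    have hpt : (fun v => K u v * starRingEnd ℂ (K u v)) = fun v => ∑ k, ∑ l,
        ((lam k : ℂ) * (lam l : ℂ) * φ k u * starRingEnd ℂ (φ l u))
          * (starRingEnd ℂ (φ k v) * φ l v) := by
      funext v
      rw [hK, map_sum, Finset.sum_mul_sum]
      refine Finset.sum_congr rfl fun k _ => Finset.sum_congr rfl fun l _ => ?_
      simp only [map_mul, Complex.conj_conj, Complex.conj_ofReal]
      ring
    rw [hpt, integral_finset_sum _ fun k _ =>
      integrable_finset_sum _ fun l _ => hIntTerm u k l]
    refine Finset.sum_congr rfl fun k _ => ?_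
    rw [integral_finset_sum _ fun l _ => hIntTerm u k l]
    have hterm : ∀ l : Fin n, (∫ v,
        ((lam k : ℂ) * (lam l : ℂ) * φ k u * starRingEnd ℂ (φ l u))
          * (starRingEnd ℂ (φ k v) * φ l v) ∂ν)
        = if k = l then ((lam k : ℂ) * (lam l : ℂ) * φ k u * starRingEnd ℂ (φ l u))
          else 0 := by
      intro l
      rw [integral_const_mul, horth' k l]
      split <;> simp
    rw [Finset.sum_congr rfl fun l _ => hterm l, Finset.sum_ite_eq Finset.univ k _]
    simp only [Finset.mem_univ, if_true]
    ring
  -- a.e. vanishing of intermediate eigenfunctions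
  have hzero : ∀ᵐ u ∂ν, ∀ k, lam k ≠ 0 → lam k ≠ 1 → φ k u = 0 := by
    filter_upwards [hone] with u hu
    have h1 : (∫ v, ‖K u v‖ ^ 2 ∂ν)
        = ∑ k, (lam k) ^ 2 * ‖φ k u‖ ^ 2 := by
      have e1 : (fun v => ‖K u v‖ ^ 2)
          = fun v => (K u v * starRingEnd ℂ (K u v)).re := by
        funext v
        rw [Complex.mul_conj, Complex.ofReal_re, Complex.sq_norm]
      have e2 := integral_re (hIntK u)
      simp only [RCLike.re_to_complex] at e2
      rw [e1, e2, hKey u, Complex.re_sum]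
      refine Finset.sum_congr rfl fun k _ => ?_
      rw [Complex.mul_conj]
      have : ((lam k : ℂ) ^ 2) * (Complex.normSq (φ k u) : ℂ)
          = (((lam k) ^ 2 * Complex.normSq (φ k u) : ℝ) : ℂ) := by
        push_cast; ring
      rw [this, Complex.ofReal_re, Complex.sq_norm]
    have h2 : (K u u).re = ∑ k, lam k * ‖φ k u‖ ^ 2 := by
      rw [hK, Complex.re_sum]
      refine Finset.sum_congr rfl fun k _ => ?_
      rw [mul_assoc, Complex.mul_conj]
      have : ((lam k : ℂ)) * (Complex.normSq (φ k u) : ℂ)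
          = (((lam k) * Complex.normSq (φ k u) : ℝ) : ℂ) := by
        push_cast; ring
      rw [this, Complex.ofReal_re, Complex.sq_norm]
    have h3 : ∑ k, (lam k - (lam k) ^ 2) * ‖φ k u‖ ^ 2 = 0 := by
      have : ∑ k, (lam k - (lam k) ^ 2) * ‖φ k u‖ ^ 2
          = (∑ k, lam k * ‖φ k u‖ ^ 2)
            - ∑ k, (lam k) ^ 2 * ‖φ k u‖ ^ 2 := by
        rw [← Finset.sum_sub_distrib]
        exact Finset.sum_congr rfl fun k _ => by ring
      rw [this, ← h1, ← h2, hu, sub_self]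
    intro k hk0 hk1
    have hnonneg : ∀ j ∈ Finset.univ, (0:ℝ) ≤ (lam j - (lam j) ^ 2) * ‖φ j u‖ ^ 2 := by
      intro j _
      have hj := hlam j
      have : 0 ≤ lam j - (lam j) ^ 2 := by nlinarith [hj.1, hj.2]
      positivity
    have hk := (Finset.sum_eq_zero_iff_of_nonneg hnonneg).mp h3 k (Finset.mem_univ k)
    have hpos : 0 < lam k - (lam k) ^ 2 := by
      have hj := hlam k
      have h0 : 0 < lam k := lt_of_le_of_ne hj.1 (Ne.symm hk0)
      have h1' : lam k < 1 := lt_of_le_of_ne hj.2 hk1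
      nlinarith
    have habs : ‖φ k u‖ ^ 2 = 0 := by
      by_contra habs
      have : 0 < ‖φ k u‖ ^ 2 :=
        lt_of_le_of_ne (by positivity) (Ne.symm habs)
      nlinarith
    have := pow_eq_zero_iff (n := 2) (by norm_num) |>.mp habs
    exact norm_eq_zero.mp this
  refine ⟨fun k hk0 hk1 => hzero.mono fun u hu => hu k hk0 hk1, ?_⟩
  -- lift to the product measure
  have hzero2 : ∀ᵐ p ∂(ν.prod ν), ∀ k, lam k ≠ 0 → lam k ≠ 1 → φ k p.1 = 0 := by
    rw [ae_iff] at hzero ⊢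
    have hsub : {p : S × S | ¬ ∀ k, lam k ≠ 0 → lam k ≠ 1 → φ k p.1 = 0}
        = {u : S | ¬ ∀ k, lam k ≠ 0 → lam k ≠ 1 → φ k u = 0} ×ˢ Set.univ := by
      ext p; simp
    rw [hsub, Measure.prod_prod, hzero, zero_mul]
  filter_upwards [hzero2] with p hp
  rw [hK]
  rw [← Finset.sum_subset (Finset.filter_subset (fun k => lam k = 1) Finset.univ)]
  · refine Finset.sum_congr rfl fun k hk => ?_
    rw [Finset.mem_filter] at hk
    rw [hk.2]
    simp
  · intro k _ hk
    rw [Finset.mem_filter] at hk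
    push_neg at hk
    have hk1 : lam k ≠ 1 := hk (Finset.mem_univ k)
    by_cases hk0 : lam k = 0
    · simp [hk0]
    · rw [hp k hk0 hk1]; ring
end

section
/- Let $\alpha > 0$, $\beta > 0$ with $\alpha\beta \le 1$, and define the scaled Ginibre kernel $K(v,w) = \frac{\alpha}{\pi}\exp\left(\frac{v\overline{w}}{\beta} - \frac{|v|^2+|w|^2}{2\beta}\right)$ on $\mathbb{C}$. Then for every $u \in \mathbb{C}$, $p_u := \frac{1}{K(u,u)}\int_{\mathbb{C}} |K(u,v)|^2 \, dv = \alpha\beta$, and the normalized function $f_u(v) = |K(u,v)|^2 / \int_{\mathbb{C}}|K(u,w)|^2 dw$ equals $\frac{1}{\pi\beta}\exp(-|v-u|^2/\beta)$. -/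
open MeasureTheory

lemma gauss_complex_aux (β : ℝ) (hβ : 0 < β) (u : ℂ) :
    (∫ v : ℂ, Real.exp (-(‖v - u‖ ^ 2) / β)) = Real.pi * β := by
  rw [← (Complex.volume_preserving_equiv_real_prod.symm).integral_comp
    Complex.measurableEquivRealProd.symm.measurableEmbedding
    (fun v : ℂ => Real.exp (-(‖v - u‖ ^ 2) / β))]
  have h : ∀ p : ℝ × ℝ,
      Real.exp (-(‖Complex.measurableEquivRealProd.symm p - u‖ ^ 2) / β)
      = Real.exp (-(1/β) * (p.1 - u.re) ^ 2) * Real.exp (-(1/β) * (p.2 - u.im) ^ 2) := by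
    intro p
    rw [← Real.exp_add]
    congr 1
    rw [← Complex.normSq_eq_norm_sq, Complex.normSq_apply]
    simp [Complex.measurableEquivRealProd, Complex.equivRealProd]
    ring
  simp_rw [h]
  rw [Measure.volume_eq_prod, integral_prod_mul
    (f := fun x => Real.exp (-(1/β) * (x - u.re) ^ 2))
    (g := fun y => Real.exp (-(1/β) * (y - u.im) ^ 2))]
  have g : ∀ c : ℝ, (∫ x : ℝ, Real.exp (-(1/β) * (x - c) ^ 2)) = Real.sqrt (Real.pi * β) := by
    intro c
    simp_rw [sub_eq_add_neg]
    rw [integral_add_right_eq_self (fun x => Real.exp (-(1/β) * x ^ 2)) (-c),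
      integral_gaussian]
    rw [div_div_eq_mul_div, div_one]
  rw [g, g]
  exact Real.mul_self_sqrt (by positivity)

lemma re_exponent_aux (β : ℝ) (hβ : 0 < β) (u v : ℂ) :
    (u * starRingEnd ℂ v / (β : ℂ) -
        (((‖u‖ ^ 2 + ‖v‖ ^ 2 : ℝ) : ℂ)) / (2 * (β : ℂ))).re
      = -(‖v - u‖ ^ 2) / (2 * β) := by
  rw [← Complex.normSq_eq_norm_sq, ← Complex.normSq_eq_norm_sq, ← Complex.normSq_eq_norm_sq]
  have hb : (β : ℝ) ≠ 0 := ne_of_gt hβ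
  simp [Complex.div_re, Complex.normSq_apply, Complex.mul_re, Complex.mul_im,
    Complex.sub_re, Complex.sub_im, Complex.add_re, Complex.add_im]
  field_simp
  ring

/-- For the scaled `β`-Ginibre kernel
`K(v,w) = (α/π) exp(v conj(w)/β - (|v|²+|w|²)/(2β))` with `α, β > 0`, `αβ ≤ 1`:
`p_u = (1/K(u,u)) ∫ |K(u,v)|² dv = αβ`, and the conditional density of the
removed point is `f_u(v) = (1/(πβ)) exp(-|v-u|²/β)`, i.e. `N_ℂ(u,β)`. -/
theorem scaled_ginibre_pu_and_density
    (α β : ℝ) (hα : 0 < α) (hβ : 0 < β) (hαβ : α * β ≤ 1)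
    (K : ℂ → ℂ → ℂ)
    (hK : ∀ v w, K v w = ((α / Real.pi : ℝ) : ℂ) *
      Complex.exp (v * starRingEnd ℂ w / (β : ℂ) -
        (((‖v‖ ^ 2 + ‖w‖ ^ 2 : ℝ) : ℂ)) / (2 * (β : ℂ)))) :
    ∀ u : ℂ,
      (1 / (K u u).re) * (∫ v : ℂ, ‖K u v‖ ^ 2) = α * β ∧
      ∀ v : ℂ,
        ‖K u v‖ ^ 2 / (∫ w : ℂ, ‖K u w‖ ^ 2) =
          (1 / (Real.pi * β)) * Real.exp (-(‖v - u‖ ^ 2) / β) := by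
  intro u
  have hb : (β : ℝ) ≠ 0 := ne_of_gt hβ
  have hπ : (0 : ℝ) < Real.pi := Real.pi_pos
  have habs : ∀ v : ℂ, ‖K u v‖ ^ 2
      = (α / Real.pi) ^ 2 * Real.exp (-(‖v - u‖ ^ 2) / β) := by
    intro v
    rw [hK, norm_mul, Complex.norm_real, Real.norm_eq_abs, Complex.norm_exp,
      abs_of_pos (div_pos hα hπ), mul_pow, sq (Real.exp _), ← Real.exp_add,
      re_exponent_aux β hβ u v]
    congr 1
    field_simp
    ring
  have hint : (∫ v : ℂ, ‖K u v‖ ^ 2) = (α / Real.pi) ^ 2 * (Real.pi * β) := by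
    simp_rw [habs]
    rw [integral_const_mul, gauss_complex_aux β hβ u]
  have hKuu : (K u u).re = α / Real.pi := by
    have h0 : u * starRingEnd ℂ u / (β : ℂ) -
        (((‖u‖ ^ 2 + ‖u‖ ^ 2 : ℝ) : ℂ)) / (2 * (β : ℂ)) = 0 := by
      rw [Complex.mul_conj]
      have : ((‖u‖ ^ 2 + ‖u‖ ^ 2 : ℝ) : ℂ)
          = 2 * (Complex.normSq u : ℂ) := by
        rw [← Complex.normSq_eq_norm_sq]
        push_cast
        ring
      rw [this]
      have hbC : (β : ℂ) ≠ 0 := by exact_mod_cast hb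
      field_simp
      ring
    rw [hK, h0, Complex.exp_zero, mul_one, Complex.ofReal_re]
  constructor
  · rw [hKuu, hint]
    field_simp
  · intro v
    rw [habs, hint]
    rw [div_eq_iff (by positivity)]
    field_simp
end
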